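/- Let (ξ_k)_{k≥1} be a Markov chain with transition kernels Q_k(x,A) = P(ξ_k ∈ A | ξ_{k-1} = x) and marginals P_k, satisfying: for every k ≥ 2 there is a set S'_k with P_{k-1}(S'_k) = 1 such that a P_k(A) ≤ Q_k(x,A) ≤ b P_k(A) for all x ∈ S'_k and A measurable, where 0 < a ≤ 1 ≤ b. Let X_j = g_j(ξ_j) for measurable functions g_j, S_n = X_1 + ... + X_n, f_j(u) = E(exp(i u X_j)), and γ = a⁴/b. Then |E(exp(i u S_n))|⁴ ≤ ∏_{j=1}^n [1 - (γ/2)(1 - |f_j(u)|²)] for all u ∈ ℝ. -/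

import Mathlib

open MeasureTheory

namespace CharFunAux

open ProbabilityTheory Complex

lemma norm_exp_I' (u x : ℝ) : ‖Complex.exp (u * x * Complex.I)‖ = 1 := by
  rw [show ((u : ℂ) * x) = ((u * x : ℝ) : ℂ) by push_cast; ring,
    Complex.norm_exp_ofReal_mul_I]

lemma integrable_of_bound {α E : Type*} [MeasurableSpace α] [NormedAddCommGroup E]
    {μ : Measure α} [IsFiniteMeasure μ] {f : α → E} (hf : AEStronglyMeasurable f μ)
    (C : ℝ) (h : ∀ᵐ x ∂μ, ‖f x‖ ≤ C) : Integrable f μ :=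
  Integrable.mono' (integrable_const C) hf h

/-- the backward value functions of the chain -/
noncomputable def auxV {S : Type*} [MeasurableSpace S] (Q : ℕ → ProbabilityTheory.Kernel S S)
    (g : ℕ → S → ℝ) (u : ℝ) : ℕ → ℕ → S → ℂ
  | 0, _, _ => 1
  | m + 1, k, x => ∫ y, Complex.exp (u * g k y * Complex.I) * auxV Q g u m (k + 1) y ∂(Q k x)

noncomputable def auxM (D : ℕ → ℝ) : ℕ → ℕ → ℝ
  | 0, _ => 1
  | 1, k => D k
  | m + 2, k => D k * auxM D m (k + 2)

section auxV

variable {S : Type*} [MeasurableSpace S] (Q : ℕ → ProbabilityTheory.Kernel S S)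
  [∀ k, ProbabilityTheory.IsMarkovKernel (Q k)] (g : ℕ → S → ℝ) (u : ℝ)

lemma auxV_stronglyMeasurable (hg : ∀ j, Measurable (g j)) :
    ∀ m k, StronglyMeasurable (auxV Q g u m k) := by
  intro m
  induction m with
  | zero => exact fun k => stronglyMeasurable_const
  | succ m ih =>
    intro k
    have hsm : StronglyMeasurable fun p : S × S =>
        Complex.exp (u * g k p.2 * Complex.I) * auxV Q g u m (k + 1) p.2 := by
      apply StronglyMeasurable.mul
      · refine (Complex.measurable_exp.comp ?_).stronglyMeasurable
        exact (((Complex.measurable_ofReal.comp ((hg k).comp measurable_snd)).const_mul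
          (u : ℂ)).mul_const Complex.I)
      · exact (ih (k + 1)).comp_measurable measurable_snd
    exact hsm.integral_kernel_prod_right'

lemma auxV_norm_le_one : ∀ m k x, ‖auxV Q g u m k x‖ ≤ 1 := by
  intro m
  induction m with
  | zero => intro k x; simp [auxV]
  | succ m ih =>
    intro k x
    have hb : ∀ᵐ y ∂(Q k x), ‖Complex.exp (u * g k y * Complex.I) *
        auxV Q g u m (k + 1) y‖ ≤ 1 := by
      filter_upwards with y
      rw [norm_mul, norm_exp_I', one_mul]
      exact ih (k + 1) y
    calc ‖auxV Q g u (m + 1) k x‖ ≤ 1 * ((Q k x) Set.univ).toReal :=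
          norm_integral_le_of_norm_le_const hb
      _ = 1 := by simp

end auxV

lemma auxM_nonneg {D : ℕ → ℝ} (hD : ∀ k, 0 ≤ D k) : ∀ m k, 0 ≤ auxM D m k := by
  intro m
  induction m using Nat.strong_induction_on with
  | _ m ih =>
    intro k
    match m with
    | 0 => simp [auxM]
    | 1 => simpa [auxM] using hD k
    | m + 2 =>
      rw [show auxM D (m + 2) k = D k * auxM D m (k + 2) from rfl]
      exact mul_nonneg (hD k) (ih m (by omega) (k + 2))

lemma auxM_prod (D : ℕ → ℝ) : ∀ m k, auxM D m (k + 1) * auxM D (m + 1) k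
    = ∏ j ∈ Finset.Ico k (k + m + 1), D j := by
  intro m
  induction m with
  | zero => intro k; simp [auxM]
  | succ m ih =>
    intro k
    rw [show auxM D (m + 1 + 1) k = D k * auxM D m (k + 2) from rfl]
    rw [Finset.prod_eq_prod_Ico_succ_bot (by omega : k < k + (m + 1) + 1)]
    have h2 : k + 1 + m + 1 = k + (m + 1) + 1 := by omega
    calc auxM D (m + 1) (k + 1) * (D k * auxM D m (k + 2))
        = D k * (auxM D m (k + 1 + 1) * auxM D (m + 1) (k + 1)) := by ring
      _ = D k * ∏ j ∈ Finset.Ico (k + 1) (k + 1 + m + 1), D j := by rw [ih (k + 1)]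
      _ = D k * ∏ j ∈ Finset.Ico (k + 1) (k + (m + 1) + 1), D j := by rw [h2]

lemma real_dom_bound {α : Type*} [MeasurableSpace α] {μ ν : Measure α}
    [IsProbabilityMeasure μ] [IsProbabilityMeasure ν] {a : ℝ} (ha0 : 0 ≤ a)
    (hle : ENNReal.ofReal a • ν ≤ μ) {φ : α → ℝ}
    (hm1 : AEStronglyMeasurable φ μ) (hm2 : AEStronglyMeasurable φ ν) {M : ℝ}
    (hb1 : ∀ᵐ x ∂μ, |φ x| ≤ M) (hb2 : ∀ᵐ x ∂ν, |φ x| ≤ M) :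
    ∫ x, φ x ∂μ - a * ∫ x, φ x ∂ν ≤ (1 - a) * M := by
  have hint1 : Integrable φ μ := by
    refine Integrable.mono' (integrable_const M) hm1 ?_
    filter_upwards [hb1] with x hx using by simpa using hx
  have hint2 : Integrable φ ν := by
    refine Integrable.mono' (integrable_const M) hm2 ?_
    filter_upwards [hb2] with x hx using by simpa using hx
  have hnn : 0 ≤ᵐ[μ] fun x => M - φ x := by
    filter_upwards [hb1] with x hx; have := (abs_le.mp hx).2; simp; linarith
  have key : ∫ x, (M - φ x) ∂(ENNReal.ofReal a • ν) ≤ ∫ x, (M - φ x) ∂μ :=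
    integral_mono_measure hle hnn ((integrable_const M).sub hint1)
  rw [integral_smul_measure, ENNReal.toReal_ofReal ha0, smul_eq_mul] at key
  have h1 : ∫ x, (M - φ x) ∂μ = M - ∫ x, φ x ∂μ := by
    rw [integral_sub (integrable_const M) hint1, integral_const]; simp
  have h2 : ∫ x, (M - φ x) ∂ν = M - ∫ x, φ x ∂ν := by
    rw [integral_sub (integrable_const M) hint2, integral_const]; simp
  rw [h1, h2] at key
  nlinarith

lemma rotation_bound {α : Type*} [MeasurableSpace α] {μ ν : Measure α}
    [IsProbabilityMeasure μ] [IsProbabilityMeasure ν] {a : ℝ} (ha0 : 0 ≤ a) (ha1 : a ≤ 1)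
    (hle : ENNReal.ofReal a • ν ≤ μ) {f : α → ℂ}
    (hm1 : AEStronglyMeasurable f μ) (hm2 : AEStronglyMeasurable f ν) {M : ℝ} (hM : 0 ≤ M)
    (hb1 : ∀ᵐ x ∂μ, ‖f x‖ ≤ M) (hb2 : ∀ᵐ x ∂ν, ‖f x‖ ≤ M) :
    ‖(∫ x, f x ∂μ) - (a : ℂ) * ∫ x, f x ∂ν‖ ≤ (1 - a) * M := by
  have hint1 : Integrable f μ := Integrable.mono' (integrable_const M) hm1 hb1
  have hint2 : Integrable f ν := Integrable.mono' (integrable_const M) hm2 hb2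
  set z : ℂ := (∫ x, f x ∂μ) - (a : ℂ) * ∫ x, f x ∂ν with hz
  rcases eq_or_ne z 0 with h0 | h0
  · rw [h0, norm_zero]; exact mul_nonneg (by linarith) hM
  · set c : ℂ := (starRingEnd ℂ) z / (‖z‖ : ℂ) with hc
    have hznorm : ((‖z‖ : ℂ)) ≠ 0 := by
      simp only [ne_eq, Complex.ofReal_eq_zero, norm_eq_zero]; exact h0
    have hconj : (starRingEnd ℂ) z * z = ((‖z‖ : ℂ)) * ‖z‖ := by
      rw [mul_comm, Complex.mul_conj]
      rw [show Complex.normSq z = ‖z‖ ^ 2 from Complex.normSq_eq_norm_sq z]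
      push_cast
      ring
    have hcz : c * z = (‖z‖ : ℂ) := by
      rw [hc, div_mul_eq_mul_div, hconj, mul_div_assoc, div_self hznorm, mul_one]
    have hcnorm : ‖c‖ = 1 := by
      rw [hc, norm_div, RCLike.norm_conj]
      simp only [Complex.norm_real, Real.norm_eq_abs, abs_norm]
      exact div_self (norm_ne_zero_iff.mpr h0)
    have hre1 : (c * ∫ x, f x ∂μ) = ∫ x, c * f x ∂μ := (integral_const_mul c f).symm
    have hre2 : (c * ∫ x, f x ∂ν) = ∫ x, c * f x ∂ν := (integral_const_mul c f).symm
    have hint1' : Integrable (fun x => c * f x) μ := hint1.const_mul c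
    have hint2' : Integrable (fun x => c * f x) ν := hint2.const_mul c
    have hreint1 : (∫ x, c * f x ∂μ).re = ∫ x, (c * f x).re ∂μ :=
      (Complex.reCLM.integral_comp_comm hint1').symm
    have hreint2 : (∫ x, c * f x ∂ν).re = ∫ x, (c * f x).re ∂ν :=
      (Complex.reCLM.integral_comp_comm hint2').symm
    have hphi_b1 : ∀ᵐ x ∂μ, |(c * f x).re| ≤ M := by
      filter_upwards [hb1] with x hx
      calc |(c * f x).re| ≤ ‖c * f x‖ := Complex.abs_re_le_norm _
        _ = ‖c‖ * ‖f x‖ := norm_mul _ _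
        _ ≤ M := by rw [hcnorm, one_mul]; exact hx
    have hphi_b2 : ∀ᵐ x ∂ν, |(c * f x).re| ≤ M := by
      filter_upwards [hb2] with x hx
      calc |(c * f x).re| ≤ ‖c * f x‖ := Complex.abs_re_le_norm _
        _ = ‖c‖ * ‖f x‖ := norm_mul _ _
        _ ≤ M := by rw [hcnorm, one_mul]; exact hx
    have main := real_dom_bound ha0 hle (Complex.continuous_re.comp_aestronglyMeasurable
      hint1'.1) (Complex.continuous_re.comp_aestronglyMeasurable hint2'.1) hphi_b1 hphi_b2
    have hznr : ‖z‖ = (c * z).re := by rw [hcz]; simp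
    have hexp : (c * z).re = (∫ x, (c * f x).re ∂μ) - a * ∫ x, (c * f x).re ∂ν := by
      have hcz2 : c * z = (∫ x, c * f x ∂μ) - (a : ℂ) * ∫ x, c * f x ∂ν := by
        rw [hz]; rw [← hre1, ← hre2]; ring
      rw [hcz2, Complex.sub_re, hreint1, Complex.re_ofReal_mul, hreint2]
    rw [hznr, hexp]
    exact main

/-- triangle-inequality consequence of `rotation_bound` -/
lemma mix_bound {α : Type*} [MeasurableSpace α] {μ ν : Measure α}
    [IsProbabilityMeasure μ] [IsProbabilityMeasure ν] {a : ℝ} (ha0 : 0 ≤ a) (ha1 : a ≤ 1)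
    (hle : ENNReal.ofReal a • ν ≤ μ) {f : α → ℂ}
    (hm1 : AEStronglyMeasurable f μ) (hm2 : AEStronglyMeasurable f ν) {M : ℝ} (hM : 0 ≤ M)
    (hb1 : ∀ᵐ x ∂μ, ‖f x‖ ≤ M) (hb2 : ∀ᵐ x ∂ν, ‖f x‖ ≤ M) :
    ‖∫ x, f x ∂μ‖ ≤ a * ‖∫ x, f x ∂ν‖ + (1 - a) * M := by
  have h1 := rotation_bound ha0 ha1 hle hm1 hm2 hM hb1 hb2
  calc ‖∫ x, f x ∂μ‖
      = ‖((a : ℂ) * ∫ x, f x ∂ν) + ((∫ x, f x ∂μ) - (a : ℂ) * ∫ x, f x ∂ν)‖ := by ring_nf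
    _ ≤ ‖(a : ℂ) * ∫ x, f x ∂ν‖ + ‖(∫ x, f x ∂μ) - (a : ℂ) * ∫ x, f x ∂ν‖ := norm_add_le _ _
    _ ≤ a * ‖∫ x, f x ∂ν‖ + (1 - a) * M := by
        refine add_le_add ?_ h1
        rw [norm_mul, Complex.norm_real, Real.norm_eq_abs, _root_.abs_of_nonneg ha0]

lemma scalar_final {a b T : ℝ} (ha : 0 < a) (ha1 : a ≤ 1) (hb1 : 1 ≤ b)
    (h0 : 0 ≤ T) (h1 : T ≤ 1) :
    (1 - a ^ 2 * (1 - T)) ^ 2 ≤ 1 - a ^ 4 / b / 2 * (1 - T ^ 2) := by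
  have hγ1 : a ^ 4 / b ≤ a ^ 4 := div_le_self (by positivity) hb1
  have ha2 : a ^ 2 ≤ 1 := by nlinarith
  have hγ2 : a ^ 4 ≤ a ^ 2 := by nlinarith [sq_nonneg a, sq_nonneg (a * a)]
  have hγ0 : 0 ≤ a ^ 4 / b := by positivity
  have hD0 : 0 ≤ 1 - a ^ 2 * (1 - T) := by nlinarith
  have hD1 : 1 - a ^ 2 * (1 - T) ≤ 1 := by nlinarith
  have hsq' : (1 - a ^ 2 * (1 - T)) ^ 2 ≤ 1 - a ^ 2 * (1 - T) := by nlinarith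
  have hDle : 1 - a ^ 2 * (1 - T) ≤ 1 - a ^ 2 / 2 * (1 - T ^ 2) := by
    nlinarith [mul_nonneg (sq_nonneg a) (sq_nonneg (1 - T))]
  have hlast : 1 - a ^ 2 / 2 * (1 - T ^ 2) ≤ 1 - a ^ 4 / b / 2 * (1 - T ^ 2) := by
    have h7 : 0 ≤ 1 - T ^ 2 := by nlinarith
    nlinarith
  linarith

end CharFunAux

open CharFunAux

set_option maxHeartbeats 1000000

/-- For a Markov chain with two-sided kernel domination `a P_k(A) ≤ Q_k(x,A) ≤ b P_k(A)`,
the characteristic function of the partial sum `S_n = X_1 + ... + X_n` (`X_j = g_j(ξ_j)`)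
satisfies `|E(exp(iuS_n))|⁴ ≤ ∏_{j=1}^n [1 - (γ/2)(1 - |f_j(u)|²)]`, with `γ = a⁴/b`. -/
theorem charFun_sum_pow_four_bound
    {Ω S : Type*} {m : MeasurableSpace Ω} [MeasurableSpace S]
    (P : Measure Ω) [IsProbabilityMeasure P]
    (ξ : ℕ → Ω → S) (hξ : ∀ k, Measurable (ξ k))
    (Q : ℕ → ProbabilityTheory.Kernel S S) [∀ k, ProbabilityTheory.IsMarkovKernel (Q k)]
    -- Markov property: for every `k ≥ 2` and bounded measurable `h`, the conditional
    -- expectation of `h(ξ_k)` given the past `σ(ξ_1, ..., ξ_{k-1})` is `∫ h dQ_k(ξ_{k-1}, ·)`.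
    (hMarkov : ∀ k, 2 ≤ k → ∀ h : S → ℝ, Measurable h → (∀ y, |h y| ≤ 1) →
      P[(fun ω => h (ξ k ω)) |
          ⨆ i ∈ Finset.Icc 1 (k - 1), MeasurableSpace.comap (ξ i) inferInstance]
        =ᵐ[P] fun ω => ∫ y, h y ∂(Q k (ξ (k - 1) ω)))
    (a b : ℝ) (ha : 0 < a) (ha1 : a ≤ 1) (hb1 : 1 ≤ b)
    -- two-sided kernel domination by the marginals `P_k = P ∘ ξ_k⁻¹`
    (hdom : ∀ k, 2 ≤ k → ∃ S' : Set S, MeasurableSet S' ∧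
      Measure.map (ξ (k - 1)) P S' = 1 ∧
      ∀ x ∈ S', ∀ A : Set S, MeasurableSet A →
        a * (Measure.map (ξ k) P A).toReal ≤ (Q k x A).toReal ∧
        (Q k x A).toReal ≤ b * (Measure.map (ξ k) P A).toReal)
    (g : ℕ → S → ℝ) (hgmeas : ∀ j, Measurable (g j))
    (n : ℕ) (u : ℝ) :
    ‖∫ ω, Complex.exp (u * (∑ j ∈ Finset.Icc 1 n, g j (ξ j ω)) * Complex.I) ∂P‖
        ^ 4 ≤
      ∏ j ∈ Finset.Icc 1 n,
        (1 - (a ^ 4 / b) / 2 *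
          (1 - ‖∫ ω, Complex.exp (u * g j (ξ j ω) * Complex.I) ∂P‖ ^ 2)) := by
  classical
  -- abbreviations
  set Pm : ℕ → Measure S := fun k => Measure.map (ξ k) P with hPmdef
  haveI hPmprob : ∀ k, IsProbabilityMeasure (Pm k) := fun k =>
    Measure.isProbabilityMeasure_map (hξ k).aemeasurable
  set e : ℕ → S → ℂ := fun k y => Complex.exp (u * g k y * Complex.I) with he
  have he_meas : ∀ k, Measurable (e k) := by
    intro k
    exact Complex.measurable_exp.comp
      (((Complex.measurable_ofReal.comp (hgmeas k)).const_mul (u : ℂ)).mul_const Complex.I)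
  have he_norm : ∀ k y, ‖e k y‖ = 1 := fun k y => norm_exp_I' u (g k y)
  choose S' hS'meas hS'one hS'dom using hdom
  have hle : ∀ k, ∀ hk : 2 ≤ k, ∀ x ∈ S' k hk, ENNReal.ofReal a • Pm k ≤ Q k x := by
    intro k hk x hx
    refine Measure.le_iff.mpr fun A hA => ?_
    have h := (hS'dom k hk x hx A hA).1
    have h1 : (ENNReal.ofReal a • Pm k) A = ENNReal.ofReal a * Pm k A := rfl
    rw [h1]
    have hfin1 : ENNReal.ofReal a * Pm k A ≠ ⊤ :=
      ENNReal.mul_ne_top ENNReal.ofReal_ne_top (measure_ne_top _ _)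
    rw [← ENNReal.toReal_le_toReal hfin1 (measure_ne_top _ _)]
    rw [ENNReal.toReal_mul, ENNReal.toReal_ofReal ha.le]
    exact h
  have hac : ∀ k, ∀ hk : 2 ≤ k, ∀ x ∈ S' k hk, Q k x ≪ Pm k := by
    intro k hk x hx
    refine Measure.AbsolutelyContinuous.mk fun A hA h0 => ?_
    have h := (hS'dom k hk x hx A hA).2
    rw [show Pm k A = 0 from h0] at h
    simp only [ENNReal.toReal_zero, mul_zero] at h
    have h2 : (Q k x A).toReal = 0 := le_antisymm h ENNReal.toReal_nonneg
    exact ((ENNReal.toReal_eq_zero_iff _).mp h2).resolve_right (measure_ne_top _ _)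
  have haeP : ∀ k, ∀ hk : 2 ≤ k, ∀ᵐ y ∂(Pm (k - 1)), y ∈ S' k hk := by
    intro k hk
    have h2 : Pm (k - 1) (S' k hk)ᶜ = 0 := by
      rw [measure_compl (hS'meas k hk) (measure_ne_top _ _), hS'one k hk]
      simp
    exact ae_iff.mpr h2
  set t : ℕ → ℝ := fun j => ‖∫ y, e j y ∂(Pm j)‖ with ht
  set D : ℕ → ℝ := fun j => 1 - a ^ 2 * (1 - t j) with hD
  have ht0 : ∀ j, 0 ≤ t j := fun j => norm_nonneg _
  have ht1 : ∀ j, t j ≤ 1 := by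
    intro j
    have hb' : ∀ᵐ y ∂(Pm j), ‖e j y‖ ≤ 1 := by filter_upwards with y; rw [he_norm]
    calc ‖∫ y, e j y ∂(Pm j)‖ ≤ 1 * ((Pm j) Set.univ).toReal :=
          norm_integral_le_of_norm_le_const hb'
      _ = 1 := by simp
  have hD0 : ∀ j, 0 ≤ D j := by
    intro j; have h1 := ht0 j; have h2 := ht1 j
    simp only [hD]; nlinarith
  -- single-step mixed bound
  have hone : ∀ k, ∀ hk : 2 ≤ k, ∀ x ∈ S' k hk,
      ‖∫ y, e k y ∂(Q k x)‖ ≤ a * t k + (1 - a) := by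
    intro k hk x hx
    have hb1 : ∀ᵐ y ∂(Q k x), ‖e k y‖ ≤ 1 := by filter_upwards with y; rw [he_norm]
    have hb2 : ∀ᵐ y ∂(Pm k), ‖e k y‖ ≤ 1 := by filter_upwards with y; rw [he_norm]
    have := mix_bound ha.le ha1 (hle k hk x hx) (he_meas k).aestronglyMeasurable
      (he_meas k).aestronglyMeasurable zero_le_one hb1 hb2
    simpa using this
  -- Claim B : backward bound on the value functions
  have claimB : ∀ l m k, m ≤ l → ∀ hk : 2 ≤ k, ∀ x ∈ S' k hk,
      ‖auxV Q g u m k x‖ ≤ auxM D m k := by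
    intro l
    induction l with
    | zero =>
      intro m k hm hk x hx
      interval_cases m
      simp [auxV, auxM]
    | succ l ih =>
      intro m k hm hk x hx
      match m with
      | 0 => simp [auxV, auxM]
      | 1 =>
        have h1 : auxV Q g u 1 k x = ∫ y, e k y ∂(Q k x) := by
          show (∫ y, e k y * auxV Q g u 0 (k + 1) y ∂(Q k x)) = _
          simp [auxV]
        rw [h1, show auxM D 1 k = D k from rfl]
        have h2 := hone k hk x hx
        have h3 := ht1 k
        simp only [hD]
        nlinarith [norm_nonneg (∫ y, e k y ∂(Q k x)),
          mul_nonneg (sub_nonneg.mpr h3) (mul_nonneg ha.le (sub_nonneg.mpr ha1))]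
      | m + 2 =>
        have hmle : m ≤ l := by omega
        have hmle1 : m + 1 ≤ l := by omega
        have hk2 : 2 ≤ k + 1 := by omega
        have hk3 : 2 ≤ k + 2 := by omega
        set M2 : ℝ := auxM D m (k + 2) with hM2
        have hM2nn : 0 ≤ M2 := auxM_nonneg hD0 m (k + 2)
        set w : S → ℂ := fun z => e (k + 1) z * auxV Q g u m (k + 2) z with hw
        have hwsm : StronglyMeasurable w :=
          (he_meas (k + 1)).stronglyMeasurable.mul
            (auxV_stronglyMeasurable Q g u hgmeas m (k + 2))
        have hwnorm : ∀ z, ‖w z‖ = ‖auxV Q g u m (k + 2) z‖ := by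
          intro z; rw [hw]; simp only []; rw [norm_mul, he_norm, one_mul]
        have hwb1 : ∀ z, ‖w z‖ ≤ 1 := by
          intro z; rw [hwnorm]; exact auxV_norm_le_one Q g u m (k + 2) z
        have hwbae : ∀ᵐ z ∂(Pm (k + 1)), ‖w z‖ ≤ M2 := by
          have hmem : ∀ᵐ z ∂(Pm (k + 1)), z ∈ S' (k + 2) hk3 := haeP (k + 2) hk3
          filter_upwards [hmem] with z hz
          rw [hwnorm]
          exact ih m k.succ.succ hmle hk3 z hz
        set c : ℂ := ∫ z, w z ∂(Pm (k + 1)) with hcdef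
        have hcb : ‖c‖ ≤ M2 := by
          calc ‖c‖ ≤ ∫ z, M2 ∂(Pm (k + 1)) :=
                norm_integral_le_of_norm_le (integrable_const M2) hwbae
            _ = M2 := by simp
        have hrho : ∀ y ∈ S' (k + 1) hk2,
            ‖auxV Q g u (m + 1) (k + 1) y - (a : ℂ) * c‖ ≤ (1 - a) * M2 := by
          intro y hy
          have hunf : auxV Q g u (m + 1) (k + 1) y = ∫ z, w z ∂(Q (k + 1) y) := rfl
          rw [hunf, hcdef]
          refine rotation_bound ha.le ha1 (hle (k + 1) hk2 y hy) hwsm.aestronglyMeasurable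
            hwsm.aestronglyMeasurable hM2nn ?_ hwbae
          exact (hac (k + 1) hk2 y hy).ae_le hwbae
        -- decomposition of the two-step integral
        have hintabc : Integrable (fun y => (a : ℂ) * c * e k y) (Q k x) := by
          refine integrable_of_bound (((he_meas k).aestronglyMeasurable).const_mul _) (a * M2) ?_
          filter_upwards with y
          rw [norm_mul, norm_mul, he_norm, mul_one, Complex.norm_real, Real.norm_eq_abs,
            _root_.abs_of_nonneg ha.le]
          exact mul_le_mul_of_nonneg_left hcb ha.le
        have hintrho : Integrable
            (fun y => e k y * (auxV Q g u (m + 1) (k + 1) y - (a : ℂ) * c)) (Q k x) := by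
          refine integrable_of_bound ?_ (1 + a * M2) ?_
          · exact ((he_meas k).aestronglyMeasurable.mul
              (((auxV_stronglyMeasurable Q g u hgmeas (m + 1) (k + 1)).sub
                stronglyMeasurable_const).aestronglyMeasurable))
          · filter_upwards with y
            rw [norm_mul, he_norm, one_mul]
            refine (norm_sub_le _ _).trans ?_
            have h1 := auxV_norm_le_one Q g u (m + 1) (k + 1) y
            have h2 : ‖(a : ℂ) * c‖ ≤ a * M2 := by
              rw [norm_mul, Complex.norm_real, Real.norm_eq_abs, _root_.abs_of_nonneg ha.le]
              exact mul_le_mul_of_nonneg_left hcb ha.le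
            linarith
        have hsplit : auxV Q g u (m + 2) k x
            = (a : ℂ) * c * (∫ y, e k y ∂(Q k x))
              + ∫ y, e k y * (auxV Q g u (m + 1) (k + 1) y - (a : ℂ) * c) ∂(Q k x) := by
          have h1 : auxV Q g u (m + 2) k x
              = ∫ y, e k y * auxV Q g u (m + 1) (k + 1) y ∂(Q k x) := rfl
          rw [h1, show (a : ℂ) * c * (∫ y, e k y ∂(Q k x))
              = ∫ y, (a : ℂ) * c * e k y ∂(Q k x) from (integral_const_mul _ _).symm,
            ← integral_add hintabc hintrho]
          congr 1; funext y; ring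
        have hQae : ∀ᵐ y ∂(Q k x), y ∈ S' (k + 1) hk2 :=
          (hac k hk x hx).ae_le (haeP (k + 1) hk2)
        have hterm2 : ‖∫ y, e k y * (auxV Q g u (m + 1) (k + 1) y - (a : ℂ) * c) ∂(Q k x)‖
            ≤ (1 - a) * M2 := by
          have hb : ∀ᵐ y ∂(Q k x),
              ‖e k y * (auxV Q g u (m + 1) (k + 1) y - (a : ℂ) * c)‖ ≤ (1 - a) * M2 := by
            filter_upwards [hQae] with y hy
            rw [norm_mul, he_norm, one_mul]
            exact hrho y hy
          calc ‖∫ y, e k y * (auxV Q g u (m + 1) (k + 1) y - (a : ℂ) * c) ∂(Q k x)‖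
              ≤ ∫ _, (1 - a) * M2 ∂(Q k x) := norm_integral_le_of_norm_le (integrable_const _) hb
            _ = (1 - a) * M2 := by simp
        rw [hsplit, show auxM D (m + 2) k = D k * auxM D m (k + 2) from rfl]
        have h1 := hone k hk x hx
        have hterm1 : ‖(a : ℂ) * c * (∫ y, e k y ∂(Q k x))‖ ≤ a * M2 * (a * t k + (1 - a)) := by
          rw [norm_mul, norm_mul, Complex.norm_real, Real.norm_eq_abs,
            _root_.abs_of_nonneg ha.le]
          have hnn : (0:ℝ) ≤ a * t k + (1 - a) := by nlinarith [ht0 k]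
          have := mul_le_mul (mul_le_mul_of_nonneg_left hcb ha.le) h1 (norm_nonneg _)
            (by positivity)
          calc a * ‖c‖ * ‖∫ y, e k y ∂(Q k x)‖ ≤ a * M2 * (a * t k + (1 - a)) := this
            _ = a * M2 * (a * t k + (1 - a)) := rfl
        calc ‖(a : ℂ) * c * (∫ y, e k y ∂(Q k x))
              + ∫ y, e k y * (auxV Q g u (m + 1) (k + 1) y - (a : ℂ) * c) ∂(Q k x)‖
            ≤ ‖(a : ℂ) * c * (∫ y, e k y ∂(Q k x))‖
              + ‖∫ y, e k y * (auxV Q g u (m + 1) (k + 1) y - (a : ℂ) * c) ∂(Q k x)‖ :=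
              norm_add_le _ _
          _ ≤ a * M2 * (a * t k + (1 - a)) + (1 - a) * M2 := add_le_add hterm1 hterm2
          _ = D k * M2 := by simp only [hD]; ring
    -- σ-algebras of the past
  have hGle : ∀ k : ℕ,
      (⨆ i ∈ Finset.Icc 1 k, MeasurableSpace.comap (ξ i) inferInstance) ≤ m := by
    intro k
    refine iSup_le fun i => iSup_le fun _ => ?_
    exact measurable_iff_comap_le.mp (hξ i)
  have hGmeas : ∀ k j, j ∈ Finset.Icc 1 k →
      Measurable[⨆ i ∈ Finset.Icc 1 k, MeasurableSpace.comap (ξ i) inferInstance]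
        fun ω => g j (ξ j ω) := by
    intro k j hj
    have h1 : Measurable[MeasurableSpace.comap (ξ j) inferInstance] (ξ j) :=
      measurable_iff_comap_le.mpr le_rfl
    exact ((hgmeas j).comp h1).mono (le_iSup_of_le j (le_iSup_of_le hj le_rfl)) le_rfl
  have intR : ∀ f : Ω → ℝ, AEStronglyMeasurable f P → (∀ ω, |f ω| ≤ 1) → Integrable f P := by
    intro f hm' hb
    refine integrable_of_bound hm' 1 ?_
    filter_upwards with ω; rw [Real.norm_eq_abs]; exact hb ω
  have real_key : ∀ k, 2 ≤ k → ∀ F : Ω → ℝ,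
      StronglyMeasurable[⨆ i ∈ Finset.Icc 1 (k - 1),
        MeasurableSpace.comap (ξ i) inferInstance] F →
      (∀ ω, |F ω| ≤ 1) → ∀ h : S → ℝ, Measurable h → (∀ y, |h y| ≤ 1) →
      ∫ ω, F ω * h (ξ k ω) ∂P = ∫ ω, F ω * ∫ y, h y ∂(Q k (ξ (k - 1) ω)) ∂P := by
    intro k hk F hF hFb h hm' hb
    have hle' := hGle (k - 1)
    have hFsm : AEStronglyMeasurable F P := (hF.mono hle').aestronglyMeasurable
    have hhm : Measurable fun ω => h (ξ k ω) := hm'.comp (hξ k)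
    have hint_h : Integrable (fun ω => h (ξ k ω)) P := intR _ hhm.aestronglyMeasurable
      (fun ω => hb _)
    have hint_Fh : Integrable (F * fun ω => h (ξ k ω)) P := by
      refine intR _ (hFsm.mul hhm.aestronglyMeasurable) fun ω => ?_
      rw [Pi.mul_apply, abs_mul]
      exact mul_le_one₀ (hFb ω) (abs_nonneg _) (hb _)
    have step2 := condExp_mul_of_stronglyMeasurable_left hF hint_Fh hint_h
    have step3 := hMarkov k hk h hm' hb
    calc ∫ ω, F ω * h (ξ k ω) ∂P = ∫ ω, (F * fun ω' => h (ξ k ω')) ω ∂P := rfl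
      _ = ∫ ω, (P[F * fun ω' => h (ξ k ω') | ⨆ i ∈ Finset.Icc 1 (k - 1),
            MeasurableSpace.comap (ξ i) inferInstance]) ω ∂P := (integral_condExp hle').symm
      _ = ∫ ω, F ω * ∫ y, h y ∂(Q k (ξ (k - 1) ω)) ∂P := by
          refine integral_congr_ae ?_
          filter_upwards [step2, step3] with ω h2 h3
          rw [h2, Pi.mul_apply, h3]
  -- complex version of the pull-out identity
  have complex_key : ∀ k, 2 ≤ k → ∀ F : Ω → ℂ,
      StronglyMeasurable[⨆ i ∈ Finset.Icc 1 (k - 1),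
        MeasurableSpace.comap (ξ i) inferInstance] F →
      (∀ ω, ‖F ω‖ ≤ 1) → ∀ H : S → ℂ, Measurable H → (∀ y, ‖H y‖ ≤ 1) →
      ∫ ω, F ω * H (ξ k ω) ∂P = ∫ ω, F ω * ∫ y, H y ∂(Q k (ξ (k - 1) ω)) ∂P := by
    intro k hk F hF hFb H hHm hHb
    have hle' := hGle (k - 1)
    have hF1sm : StronglyMeasurable[⨆ i ∈ Finset.Icc 1 (k - 1),
        MeasurableSpace.comap (ξ i) inferInstance] fun ω => (F ω).re :=
      Complex.continuous_re.comp_stronglyMeasurable hF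
    have hF2sm : StronglyMeasurable[⨆ i ∈ Finset.Icc 1 (k - 1),
        MeasurableSpace.comap (ξ i) inferInstance] fun ω => (F ω).im :=
      Complex.continuous_im.comp_stronglyMeasurable hF
    have hF1b : ∀ ω, |(F ω).re| ≤ 1 := fun ω => le_trans (Complex.abs_re_le_norm _) (hFb ω)
    have hF2b : ∀ ω, |(F ω).im| ≤ 1 := fun ω => le_trans (Complex.abs_im_le_norm _) (hFb ω)
    have hH1m : Measurable fun y => (H y).re := Complex.measurable_re.comp hHm
    have hH2m : Measurable fun y => (H y).im := Complex.measurable_im.comp hHm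
    have hH1b : ∀ y, |(H y).re| ≤ 1 := fun y => le_trans (Complex.abs_re_le_norm _) (hHb y)
    have hH2b : ∀ y, |(H y).im| ≤ 1 := fun y => le_trans (Complex.abs_im_le_norm _) (hHb y)
    have E11 := real_key k hk _ hF1sm hF1b _ hH1m hH1b
    have E12 := real_key k hk _ hF1sm hF1b _ hH2m hH2b
    have E21 := real_key k hk _ hF2sm hF2b _ hH1m hH1b
    have E22 := real_key k hk _ hF2sm hF2b _ hH2m hH2b
    -- measurability and integrability of everything
    have hFsm : AEStronglyMeasurable F P := (hF.mono hle').aestronglyMeasurable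
    have hF1sm' : AEStronglyMeasurable (fun ω => (F ω).re) P :=
      Complex.continuous_re.comp_aestronglyMeasurable hFsm
    have hF2sm' : AEStronglyMeasurable (fun ω => (F ω).im) P :=
      Complex.continuous_im.comp_aestronglyMeasurable hFsm
    have hHmξ : Measurable fun ω => H (ξ k ω) := hHm.comp (hξ k)
    have hintH : ∀ x, Integrable H (Q k x) := fun x =>
      integrable_of_bound hHm.aestronglyMeasurable 1 (Filter.Eventually.of_forall hHb)
    have hre_in : ∀ x, (∫ y, H y ∂(Q k x)).re = ∫ y, (H y).re ∂(Q k x) := fun x =>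
      (Complex.reCLM.integral_comp_comm (hintH x)).symm
    have him_in : ∀ x, (∫ y, H y ∂(Q k x)).im = ∫ y, (H y).im ∂(Q k x) := fun x =>
      (Complex.imCLM.integral_comp_comm (hintH x)).symm
    have hIHsm : StronglyMeasurable fun x => ∫ y, H y ∂(Q k x) :=
      StronglyMeasurable.integral_kernel_prod_right'
        (hHm.stronglyMeasurable.comp_measurable measurable_snd :
          StronglyMeasurable fun p : S × S => H p.2)
    have hIHb : ∀ x, ‖∫ y, H y ∂(Q k x)‖ ≤ 1 := by
      intro x
      calc ‖∫ y, H y ∂(Q k x)‖ ≤ 1 * ((Q k x) Set.univ).toReal :=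
            norm_integral_le_of_norm_le_const (Filter.Eventually.of_forall hHb)
        _ = 1 := by simp
    have hIHξ : Measurable fun ω => ∫ y, H y ∂(Q k (ξ (k - 1) ω)) :=
      hIHsm.measurable.comp (hξ (k - 1))
    have ιL : Integrable (fun ω => F ω * H (ξ k ω)) P := by
      refine integrable_of_bound (hFsm.mul hHmξ.aestronglyMeasurable) 1 ?_
      filter_upwards with ω
      rw [norm_mul]
      exact mul_le_one₀ (hFb ω) (norm_nonneg _) (hHb _)
    have ιR : Integrable (fun ω => F ω * ∫ y, H y ∂(Q k (ξ (k - 1) ω))) P := by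
      refine integrable_of_bound (hFsm.mul hIHξ.aestronglyMeasurable) 1 ?_
      filter_upwards with ω
      rw [norm_mul]
      exact mul_le_one₀ (hFb ω) (norm_nonneg _) (hIHb _)
    -- real-product integrabilities
    have ι11 : Integrable (fun ω => (F ω).re * (H (ξ k ω)).re) P := by
      refine intR _ (hF1sm'.mul ((hH1m.comp (hξ k)).aestronglyMeasurable)) fun ω => ?_
      rw [abs_mul]; exact mul_le_one₀ (hF1b ω) (abs_nonneg _) (hH1b _)
    have ι22 : Integrable (fun ω => (F ω).im * (H (ξ k ω)).im) P := by
      refine intR _ (hF2sm'.mul ((hH2m.comp (hξ k)).aestronglyMeasurable)) fun ω => ?_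
      rw [abs_mul]; exact mul_le_one₀ (hF2b ω) (abs_nonneg _) (hH2b _)
    have ι12 : Integrable (fun ω => (F ω).re * (H (ξ k ω)).im) P := by
      refine intR _ (hF1sm'.mul ((hH2m.comp (hξ k)).aestronglyMeasurable)) fun ω => ?_
      rw [abs_mul]; exact mul_le_one₀ (hF1b ω) (abs_nonneg _) (hH2b _)
    have ι21 : Integrable (fun ω => (F ω).im * (H (ξ k ω)).re) P := by
      refine intR _ (hF2sm'.mul ((hH1m.comp (hξ k)).aestronglyMeasurable)) fun ω => ?_
      rw [abs_mul]; exact mul_le_one₀ (hF2b ω) (abs_nonneg _) (hH1b _)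
    have hIre : Measurable fun ω => ∫ y, (H y).re ∂(Q k (ξ (k - 1) ω)) := by
      have h0 : (fun ω => ∫ y, (H y).re ∂(Q k (ξ (k - 1) ω)))
          = fun ω => (∫ y, H y ∂(Q k (ξ (k - 1) ω))).re := by
        funext ω; rw [hre_in]
      rw [h0]; exact Complex.measurable_re.comp hIHξ
    have hIim : Measurable fun ω => ∫ y, (H y).im ∂(Q k (ξ (k - 1) ω)) := by
      have h0 : (fun ω => ∫ y, (H y).im ∂(Q k (ξ (k - 1) ω)))
          = fun ω => (∫ y, H y ∂(Q k (ξ (k - 1) ω))).im := by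
        funext ω; rw [him_in]
      rw [h0]; exact Complex.measurable_im.comp hIHξ
    have hIreb : ∀ ω, |∫ y, (H y).re ∂(Q k (ξ (k - 1) ω))| ≤ 1 := by
      intro ω
      rw [← hre_in]
      exact le_trans (Complex.abs_re_le_norm _) (hIHb _)
    have hIimb : ∀ ω, |∫ y, (H y).im ∂(Q k (ξ (k - 1) ω))| ≤ 1 := by
      intro ω
      rw [← him_in]
      exact le_trans (Complex.abs_im_le_norm _) (hIHb _)
    have ι11' : Integrable (fun ω => (F ω).re * ∫ y, (H y).re ∂(Q k (ξ (k - 1) ω))) P := by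
      refine intR _ (hF1sm'.mul hIre.aestronglyMeasurable) fun ω => ?_
      rw [abs_mul]; exact mul_le_one₀ (hF1b ω) (abs_nonneg _) (hIreb ω)
    have ι22' : Integrable (fun ω => (F ω).im * ∫ y, (H y).im ∂(Q k (ξ (k - 1) ω))) P := by
      refine intR _ (hF2sm'.mul hIim.aestronglyMeasurable) fun ω => ?_
      rw [abs_mul]; exact mul_le_one₀ (hF2b ω) (abs_nonneg _) (hIimb ω)
    have ι12' : Integrable (fun ω => (F ω).re * ∫ y, (H y).im ∂(Q k (ξ (k - 1) ω))) P := by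
      refine intR _ (hF1sm'.mul hIim.aestronglyMeasurable) fun ω => ?_
      rw [abs_mul]; exact mul_le_one₀ (hF1b ω) (abs_nonneg _) (hIimb ω)
    have ι21' : Integrable (fun ω => (F ω).im * ∫ y, (H y).re ∂(Q k (ξ (k - 1) ω))) P := by
      refine intR _ (hF2sm'.mul hIre.aestronglyMeasurable) fun ω => ?_
      rw [abs_mul]; exact mul_le_one₀ (hF2b ω) (abs_nonneg _) (hIreb ω)
    have reEq : ∫ ω, (F ω * H (ξ k ω)).re ∂P
        = ∫ ω, (F ω * ∫ y, H y ∂(Q k (ξ (k - 1) ω))).re ∂P := by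
      have l1 : ∀ ω, (F ω * H (ξ k ω)).re
          = (F ω).re * (H (ξ k ω)).re - (F ω).im * (H (ξ k ω)).im :=
        fun ω => Complex.mul_re _ _
      have r1 : ∀ ω, (F ω * ∫ y, H y ∂(Q k (ξ (k - 1) ω))).re
          = (F ω).re * (∫ y, (H y).re ∂(Q k (ξ (k - 1) ω)))
            - (F ω).im * (∫ y, (H y).im ∂(Q k (ξ (k - 1) ω))) := by
        intro ω; rw [Complex.mul_re, hre_in, him_in]
      rw [integral_congr_ae (Filter.Eventually.of_forall l1),
        integral_congr_ae (Filter.Eventually.of_forall r1),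
        integral_sub ι11 ι22, integral_sub ι11' ι22', E11, E22]
    have imEq : ∫ ω, (F ω * H (ξ k ω)).im ∂P
        = ∫ ω, (F ω * ∫ y, H y ∂(Q k (ξ (k - 1) ω))).im ∂P := by
      have l1 : ∀ ω, (F ω * H (ξ k ω)).im
          = (F ω).re * (H (ξ k ω)).im + (F ω).im * (H (ξ k ω)).re :=
        fun ω => Complex.mul_im _ _
      have r1 : ∀ ω, (F ω * ∫ y, H y ∂(Q k (ξ (k - 1) ω))).im
          = (F ω).re * (∫ y, (H y).im ∂(Q k (ξ (k - 1) ω)))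
            + (F ω).im * (∫ y, (H y).re ∂(Q k (ξ (k - 1) ω))) := by
        intro ω; rw [Complex.mul_im, hre_in, him_in]
      rw [integral_congr_ae (Filter.Eventually.of_forall l1),
        integral_congr_ae (Filter.Eventually.of_forall r1),
        integral_add ι12 ι21, integral_add ι12' ι21', E12, E21]
    apply Complex.ext
    · calc (∫ ω, F ω * H (ξ k ω) ∂P).re
          = ∫ ω, (F ω * H (ξ k ω)).re ∂P := (Complex.reCLM.integral_comp_comm ιL).symm
        _ = ∫ ω, (F ω * ∫ y, H y ∂(Q k (ξ (k - 1) ω))).re ∂P := reEq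
        _ = (∫ ω, F ω * ∫ y, H y ∂(Q k (ξ (k - 1) ω)) ∂P).re :=
            Complex.reCLM.integral_comp_comm ιR
    · calc (∫ ω, F ω * H (ξ k ω) ∂P).im
          = ∫ ω, (F ω * H (ξ k ω)).im ∂P := (Complex.imCLM.integral_comp_comm ιL).symm
        _ = ∫ ω, (F ω * ∫ y, H y ∂(Q k (ξ (k - 1) ω))).im ∂P := imEq
        _ = (∫ ω, F ω * ∫ y, H y ∂(Q k (ξ (k - 1) ω)) ∂P).im :=
            Complex.imCLM.integral_comp_comm ιR
    -- representation of the characteristic function via backward value functions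
  have repA : ∀ d k, k + d = n → 1 ≤ k →
      (∫ ω, Complex.exp (u * (∑ j ∈ Finset.Icc 1 n, g j (ξ j ω)) * Complex.I) ∂P)
      = ∫ ω, Complex.exp (u * (∑ j ∈ Finset.Icc 1 k, g j (ξ j ω)) * Complex.I)
          * auxV Q g u (n - k) (k + 1) (ξ k ω) ∂P := by
    intro d
    induction d with
    | zero =>
      intro k hkn hk1
      have hkn' : k = n := by omega
      subst hkn'
      have : ∀ ω, Complex.exp (u * (∑ j ∈ Finset.Icc 1 k, g j (ξ j ω)) * Complex.I)
          * auxV Q g u (k - k) (k + 1) (ξ k ω)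
          = Complex.exp (u * (∑ j ∈ Finset.Icc 1 k, g j (ξ j ω)) * Complex.I) := by
        intro ω
        rw [Nat.sub_self]
        show _ * (1 : ℂ) = _
        rw [mul_one]
      rw [integral_congr_ae (Filter.Eventually.of_forall this)]
    | succ d ihd =>
      intro k hkn hk1
      have hk1n : k + 1 ≤ n := by omega
      have ih := ihd (k + 1) (by omega) (by omega)
      rw [ih]
      have hexp : ∀ ω, Complex.exp (u * (∑ j ∈ Finset.Icc 1 (k + 1), g j (ξ j ω)) * Complex.I)
          = Complex.exp (u * (∑ j ∈ Finset.Icc 1 k, g j (ξ j ω)) * Complex.I)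
            * e (k + 1) (ξ (k + 1) ω) := by
        intro ω
        rw [Finset.sum_Icc_succ_top (by omega : 1 ≤ k + 1), ← Complex.exp_add]
        congr 1
        push_cast
        ring
      -- the conditional-expectation step
      have hθm : Measurable[⨆ i ∈ Finset.Icc 1 k, MeasurableSpace.comap (ξ i) inferInstance]
          fun ω => ∑ j ∈ Finset.Icc 1 k, g j (ξ j ω) :=
        Finset.measurable_sum _ fun j hj => hGmeas k j hj
      have hFsm : StronglyMeasurable[⨆ i ∈ Finset.Icc 1 k,
          MeasurableSpace.comap (ξ i) inferInstance]
          fun ω => Complex.exp (u * (∑ j ∈ Finset.Icc 1 k, g j (ξ j ω)) * Complex.I) :=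
        (Complex.measurable_exp.comp
          (((Complex.measurable_ofReal.comp hθm).const_mul (u : ℂ)).mul_const
            Complex.I)).stronglyMeasurable
      have hFb : ∀ ω, ‖Complex.exp (u * (∑ j ∈ Finset.Icc 1 k, g j (ξ j ω)) * Complex.I)‖ ≤ 1 :=
        fun ω => le_of_eq (norm_exp_I' u _)
      have hHm : Measurable fun y => e (k + 1) y * auxV Q g u (n - (k + 1)) (k + 1 + 1) y :=
        (he_meas (k + 1)).mul
          (auxV_stronglyMeasurable Q g u hgmeas (n - (k + 1)) (k + 1 + 1)).measurable
      have hHb : ∀ y, ‖e (k + 1) y * auxV Q g u (n - (k + 1)) (k + 1 + 1) y‖ ≤ 1 := by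
        intro y
        rw [norm_mul, he_norm, one_mul]
        exact auxV_norm_le_one Q g u _ _ y
      have hkey := complex_key (k + 1) (by omega) _ hFsm hFb _ hHm hHb
      calc ∫ ω, Complex.exp (u * (∑ j ∈ Finset.Icc 1 (k + 1), g j (ξ j ω)) * Complex.I)
              * auxV Q g u (n - (k + 1)) (k + 1 + 1) (ξ (k + 1) ω) ∂P
          = ∫ ω, (fun ω' => Complex.exp
                (u * (∑ j ∈ Finset.Icc 1 k, g j (ξ j ω')) * Complex.I)) ω
              * (fun y => e (k + 1) y * auxV Q g u (n - (k + 1)) (k + 1 + 1) y)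
                (ξ (k + 1) ω) ∂P := by
            refine integral_congr_ae (Filter.Eventually.of_forall fun ω => ?_)
            dsimp only
            rw [hexp ω]
            try ring
        _ = ∫ ω, Complex.exp (u * (∑ j ∈ Finset.Icc 1 k, g j (ξ j ω)) * Complex.I)
              * (∫ y, e (k + 1) y * auxV Q g u (n - (k + 1)) (k + 1 + 1) y
                  ∂(Q (k + 1) (ξ k ω))) ∂P := hkey
        _ = ∫ ω, Complex.exp (u * (∑ j ∈ Finset.Icc 1 k, g j (ξ j ω)) * Complex.I)
              * auxV Q g u (n - k) (k + 1) (ξ k ω) ∂P := by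
            rw [show n - k = (n - (k + 1)) + 1 from by omega]
            try rfl
  -- final assembly
  rcases Nat.eq_zero_or_pos n with hn0 | hn1
  · subst hn0
    rw [show Finset.Icc 1 0 = (∅ : Finset ℕ) from by rfl]
    simp
  · have h2le : (2 : ℕ) ≤ 2 := le_rfl
    have hrep := repA (n - 1) 1 (by omega) le_rfl
    have hrep1 : (∫ ω, Complex.exp (u * (∑ j ∈ Finset.Icc 1 n, g j (ξ j ω)) * Complex.I) ∂P)
        = ∫ x, e 1 x * auxV Q g u (n - 1) 2 x ∂(Pm 1) := by
      rw [hrep]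
      have hcongr : ∀ ω, Complex.exp (u * (∑ j ∈ Finset.Icc 1 1, g j (ξ j ω)) * Complex.I)
          * auxV Q g u (n - 1) (1 + 1) (ξ 1 ω)
          = (fun x => e 1 x * auxV Q g u (n - 1) 2 x) (ξ 1 ω) := by
        intro ω
        rw [show Finset.Icc 1 1 = {1} from rfl, Finset.sum_singleton]
        try rfl
      rw [integral_congr_ae (Filter.Eventually.of_forall hcongr)]
      exact (integral_map (hξ 1).aemeasurable
        ((he_meas 1).stronglyMeasurable.mul
          (auxV_stronglyMeasurable Q g u hgmeas (n - 1) 2)).aestronglyMeasurable).symm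
    set φ : ℂ := ∫ ω, Complex.exp (u * (∑ j ∈ Finset.Icc 1 n, g j (ξ j ω)) * Complex.I) ∂P
      with hφ
    have hbound1 : ‖φ‖ ≤ auxM D (n - 1) 2 := by
      rw [hrep1]
      have hb : ∀ᵐ x ∂(Pm 1), ‖e 1 x * auxV Q g u (n - 1) 2 x‖ ≤ auxM D (n - 1) 2 := by
        filter_upwards [haeP 2 h2le] with x hx
        rw [norm_mul, he_norm, one_mul]
        exact claimB (n - 1) (n - 1) 2 le_rfl h2le x hx
      calc ‖∫ x, e 1 x * auxV Q g u (n - 1) 2 x ∂(Pm 1)‖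
          ≤ ∫ _, auxM D (n - 1) 2 ∂(Pm 1) :=
            norm_integral_le_of_norm_le (integrable_const _) hb
        _ = auxM D (n - 1) 2 := by simp
    have hbound2 : ‖φ‖ ≤ auxM D n 1 := by
      rcases Nat.lt_or_ge n 2 with hn2 | hn2
      · -- n = 1
        have hn1' : n = 1 := by omega
        subst hn1'
        rw [hrep1]
        have hcongr : ∀ x : S, e 1 x * auxV Q g u 0 2 x = e 1 x := by
          intro x
          show e 1 x * (1 : ℂ) = e 1 x
          rw [mul_one]
        rw [integral_congr_ae (Filter.Eventually.of_forall hcongr)]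
        rw [show auxM D 1 1 = D 1 from rfl]
        have h3 := ht1 1
        have h4 : t 1 = ‖∫ y, e 1 y ∂(Pm 1)‖ := rfl
        simp only [hD]
        nlinarith [mul_nonneg (mul_nonneg ha.le (sub_nonneg.mpr ha1))
          (sub_nonneg.mpr (ht1 1)), ht0 1,
          mul_nonneg (sub_nonneg.mpr ha1) (sub_nonneg.mpr (ht1 1))]
      · -- n ≥ 2
        have hk3 : (2 : ℕ) ≤ 3 := by omega
        set m2 : ℕ := n - 2 with hm2def
        have hnm : n = m2 + 2 := by omega
        set M3 : ℝ := auxM D m2 3 with hM3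
        have hM3nn : 0 ≤ M3 := auxM_nonneg hD0 _ _
        set w : S → ℂ := fun z => e 2 z * auxV Q g u m2 3 z with hw
        have hwsm : StronglyMeasurable w :=
          (he_meas 2).stronglyMeasurable.mul (auxV_stronglyMeasurable Q g u hgmeas m2 3)
        have hwnorm : ∀ z, ‖w z‖ = ‖auxV Q g u m2 3 z‖ := by
          intro z; rw [hw]; simp only []; rw [norm_mul, he_norm, one_mul]
        have hwbae : ∀ᵐ z ∂(Pm 2), ‖w z‖ ≤ M3 := by
          filter_upwards [haeP 3 hk3] with z hz
          rw [hwnorm]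
          exact claimB m2 m2 3 le_rfl hk3 z hz
        set c : ℂ := ∫ z, w z ∂(Pm 2) with hcdef
        have hcb : ‖c‖ ≤ M3 := by
          calc ‖c‖ ≤ ∫ _, M3 ∂(Pm 2) :=
                norm_integral_le_of_norm_le (integrable_const M3) hwbae
            _ = M3 := by simp
        have hrho : ∀ x ∈ S' 2 h2le,
            ‖auxV Q g u (m2 + 1) 2 x - (a : ℂ) * c‖ ≤ (1 - a) * M3 := by
          intro x hx
          have hunf : auxV Q g u (m2 + 1) 2 x = ∫ z, w z ∂(Q 2 x) := rfl
          rw [hunf, hcdef]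
          refine rotation_bound ha.le ha1 (hle 2 h2le x hx) hwsm.aestronglyMeasurable
            hwsm.aestronglyMeasurable hM3nn ?_ hwbae
          exact (hac 2 h2le x hx).ae_le hwbae
        have hintabc : Integrable (fun x => (a : ℂ) * c * e 1 x) (Pm 1) := by
          refine integrable_of_bound (((he_meas 1).aestronglyMeasurable).const_mul _)
            (a * M3) ?_
          filter_upwards with x
          rw [norm_mul, norm_mul, he_norm, mul_one, Complex.norm_real, Real.norm_eq_abs,
            _root_.abs_of_nonneg ha.le]
          exact mul_le_mul_of_nonneg_left hcb ha.le
        have hintrho : Integrable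
            (fun x => e 1 x * (auxV Q g u (m2 + 1) 2 x - (a : ℂ) * c)) (Pm 1) := by
          refine integrable_of_bound ?_ (1 + a * M3) ?_
          · exact ((he_meas 1).aestronglyMeasurable.mul
              (((auxV_stronglyMeasurable Q g u hgmeas (m2 + 1) 2).sub
                stronglyMeasurable_const).aestronglyMeasurable))
          · filter_upwards with x
            rw [norm_mul, he_norm, one_mul]
            refine (norm_sub_le _ _).trans ?_
            have h1 := auxV_norm_le_one Q g u (m2 + 1) 2 x
            have h2 : ‖(a : ℂ) * c‖ ≤ a * M3 := by
              rw [norm_mul, Complex.norm_real, Real.norm_eq_abs, _root_.abs_of_nonneg ha.le]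
              exact mul_le_mul_of_nonneg_left hcb ha.le
            linarith
        have hsplit : (∫ x, e 1 x * auxV Q g u (n - 1) 2 x ∂(Pm 1))
            = (a : ℂ) * c * (∫ x, e 1 x ∂(Pm 1))
              + ∫ x, e 1 x * (auxV Q g u (m2 + 1) 2 x - (a : ℂ) * c) ∂(Pm 1) := by
          rw [show n - 1 = m2 + 1 from by omega]
          rw [show (a : ℂ) * c * (∫ x, e 1 x ∂(Pm 1))
              = ∫ x, (a : ℂ) * c * e 1 x ∂(Pm 1) from (integral_const_mul _ _).symm,
            ← integral_add hintabc hintrho]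
          congr 1; funext x; ring
        have hterm2 : ‖∫ x, e 1 x * (auxV Q g u (m2 + 1) 2 x - (a : ℂ) * c) ∂(Pm 1)‖
            ≤ (1 - a) * M3 := by
          have hb : ∀ᵐ x ∂(Pm 1),
              ‖e 1 x * (auxV Q g u (m2 + 1) 2 x - (a : ℂ) * c)‖ ≤ (1 - a) * M3 := by
            filter_upwards [haeP 2 h2le] with x hx
            rw [norm_mul, he_norm, one_mul]
            exact hrho x hx
          calc ‖∫ x, e 1 x * (auxV Q g u (m2 + 1) 2 x - (a : ℂ) * c) ∂(Pm 1)‖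
              ≤ ∫ _, (1 - a) * M3 ∂(Pm 1) :=
                norm_integral_le_of_norm_le (integrable_const _) hb
            _ = (1 - a) * M3 := by simp
        have hterm1 : ‖(a : ℂ) * c * (∫ x, e 1 x ∂(Pm 1))‖ ≤ a * M3 * t 1 := by
          rw [norm_mul, norm_mul, Complex.norm_real, Real.norm_eq_abs,
            _root_.abs_of_nonneg ha.le]
          have h4 : ‖∫ x, e 1 x ∂(Pm 1)‖ = t 1 := rfl
          rw [h4]
          exact mul_le_mul_of_nonneg_right (mul_le_mul_of_nonneg_left hcb ha.le) (ht0 1)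
        have htot : ‖φ‖ ≤ a * M3 * t 1 + (1 - a) * M3 := by
          rw [hrep1, hsplit]
          exact (norm_add_le _ _).trans (add_le_add hterm1 hterm2)
        have hfin : a * M3 * t 1 + (1 - a) * M3 ≤ D 1 * M3 := by
          have h5 := ht1 1
          have h6 := ht0 1
          simp only [hD]
          nlinarith [mul_nonneg (mul_nonneg (mul_nonneg ha.le (sub_nonneg.mpr ha1))
            (sub_nonneg.mpr h5)) hM3nn]
        have heq : D 1 * M3 = auxM D n 1 := by
          rw [hnm]
          try rfl
        exact htot.trans (hfin.trans_eq heq)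
    -- multiply the two bounds
    have hprod : auxM D (n - 1) 2 * auxM D n 1 = ∏ j ∈ Finset.Icc 1 n, D j := by
      have hp := auxM_prod D (n - 1) 1
      rw [show (1 : ℕ) + 1 = 2 from rfl, show (n - 1) + 1 = n from by omega,
        show 1 + (n - 1) + 1 = n + 1 from by omega] at hp
      rw [hp, Finset.Ico_add_one_right_eq_Icc]
    have hsq : ‖φ‖ ^ 2 ≤ ∏ j ∈ Finset.Icc 1 n, D j := by
      rw [← hprod, sq]
      exact mul_le_mul hbound1 hbound2 (norm_nonneg _) (auxM_nonneg hD0 _ _)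
    have hperfactor : ∀ j ∈ Finset.Icc 1 n, D j ^ 2
        ≤ 1 - (a ^ 4 / b) / 2 *
          (1 - ‖∫ ω, Complex.exp (u * g j (ξ j ω) * Complex.I) ∂P‖ ^ 2) := by
      intro j _
      have hmapj : (∫ y, e j y ∂(Pm j)) = ∫ ω, e j (ξ j ω) ∂P :=
        integral_map (hξ j).aemeasurable (he_meas j).aestronglyMeasurable
      have htj : ‖∫ ω, Complex.exp (u * g j (ξ j ω) * Complex.I) ∂P‖ = t j := by
        rw [ht]
        simp only []
        rw [hmapj]
        try rfl
      rw [htj]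
      exact scalar_final ha ha1 hb1 (ht0 j) (ht1 j)
    have habs : ‖φ‖ = ‖φ‖ := rfl
    calc ‖φ‖ ^ 4 = (‖φ‖ ^ 2) ^ 2 := by rw [habs]; ring
      _ ≤ (∏ j ∈ Finset.Icc 1 n, D j) ^ 2 := by
          apply pow_le_pow_left₀ (by positivity) hsq
      _ = ∏ j ∈ Finset.Icc 1 n, D j ^ 2 := by rw [Finset.prod_pow]
      _ ≤ ∏ j ∈ Finset.Icc 1 n,
          (1 - (a ^ 4 / b) / 2 *
            (1 - ‖∫ ω, Complex.exp (u * g j (ξ j ω) * Complex.I) ∂P‖ ^ 2)) :=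
          Finset.prod_le_prod (fun j _ => sq_nonneg _) hperfactor
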